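/- There is an absolute constant n₀ such that the following holds for all n ≥ n₀. Let p ∈ (0,2], ε ∈ (0,1], c ≥ 0 and k an integer with 1 ≤ k ≤ n, and suppose a_k² ≥ (ε/log n)^c · ‖x_{-k}‖₂²/k. If j is an index such that ζ(1+ε)^{t−j} ≥ |a_k| and the level set S_j contributes (for the top-k problem), then, writing v = ζ(1+ε)^{t−j−1}, one has v² · s_j ≥ (ε/log n)^{c+4} · ‖x_{-rank(v)}‖₂². -/

import Mathlib

open Finset

noncomputable section

/-- `t = 1 + log_{1+ε} m`, all logarithms natural. -/
def tExp (ε m : ℝ) : ℝ := 1 + Real.log m / Real.log (1 + ε)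

/-- The level set `S_j = {i : ζ(1+ε)^{t-j-1} ≤ |x_i| < ζ(1+ε)^{t-j}}`. -/
def levelSet {n : ℕ} (x : Fin n → ℤ) (ε m ζ : ℝ) (j : ℕ) : Finset (Fin n) :=
  Finset.univ.filter fun i =>
    ζ * (1 + ε) ^ (tExp ε m - (j : ℝ) - 1) ≤ |(x i : ℝ)| ∧
      |(x i : ℝ)| < ζ * (1 + ε) ^ (tExp ε m - (j : ℝ))

/-- `rank(v)`: the number of indices with `|x_i| > v`. -/
def rankOf {n : ℕ} (x : Fin n → ℤ) (v : ℝ) : ℕ :=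
  (Finset.univ.filter fun i : Fin n => v < |(x i : ℝ)|).card

/-- `Σ_{i=1}^k |a_i|^p` (paper is 1-indexed; here `a` is 0-indexed). -/
def topSum {n : ℕ} (a : Fin n → ℤ) (p : ℝ) (k : ℕ) : ℝ :=
  ∑ i ∈ Finset.univ.filter (fun i : Fin n => (i : ℕ) < k), |(a i : ℝ)| ^ p

/-- `Σ_{i=k+1}^n |a_i|^p = ‖x_{-k}‖_p^p` (paper is 1-indexed). -/
def tailSum {n : ℕ} (a : Fin n → ℤ) (p : ℝ) (k : ℕ) : ℝ :=
  ∑ i ∈ Finset.univ.filter (fun i : Fin n => k ≤ (i : ℕ)), |(a i : ℝ)| ^ p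

/-- `Σ_{i=k+1}^{n-k} |a_i|^p` (paper is 1-indexed). -/
def midSum {n : ℕ} (a : Fin n → ℤ) (p : ℝ) (k : ℕ) : ℝ :=
  ∑ i ∈ Finset.univ.filter (fun i : Fin n => k ≤ (i : ℕ) ∧ (i : ℕ) < n - k), |(a i : ℝ)| ^ p

/-- `|a_k|` for paper (1-indexed) index `k`, i.e. 0-indexed entry `k-1`. -/
def aAbs {n : ℕ} (a : Fin n → ℤ) (k : ℕ) : ℝ :=
  if h : k - 1 < n then |(a ⟨k - 1, h⟩ : ℝ)| else 0

/-- `a` is `x` rearranged in non-increasing order of absolute value. -/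
def IsRearrangement {n : ℕ} (x a : Fin n → ℤ) : Prop :=
  (∃ σ : Equiv.Perm (Fin n), ∀ i, a i = x (σ i)) ∧
    ∀ i i' : Fin n, i ≤ i' → |a i'| ≤ |a i|

/-- The level set `S_j` contributes (for the top-`k` problem with exponent `p`). -/
def ContributesTop {n : ℕ} (x a : Fin n → ℤ) (p ε m ζ : ℝ) (j k : ℕ) : Prop :=
  ε ^ 2 / Real.log m * topSum a p k ≤ ∑ i ∈ levelSet x ε m ζ j, |(x i : ℝ)| ^ p

/-- The level set `S_j` contributes (for the trimmed-`k` problem with exponent `p`). -/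
def ContributesTrim {n : ℕ} (x a : Fin n → ℤ) (p ε m ζ : ℝ) (j k : ℕ) : Prop :=
  ε ^ 2 / Real.log m * (midSum a p k + k * aAbs a k ^ p) ≤
    ∑ i ∈ levelSet x ε m ζ j, |(x i : ℝ)| ^ p

/-- there is an absolute constant `n₀` such that for all `n ≥ n₀`, if
`a_k² ≥ (ε/log n)^c · ‖x_{-k}‖₂²/k`, `ζ(1+ε)^{t-j} ≥ |a_k|`, and `S_j` contributes for the
top-`k` problem, then `v² · s_j ≥ (ε/log n)^{c+4} · ‖x_{-rank(v)}‖₂²`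
where `v = ζ(1+ε)^{t-j-1}`. -/
lemma card_filter_fin_lt (n k : ℕ) (hk : k ≤ n) :
    ((Finset.univ : Finset (Fin n)).filter fun i : Fin n => (i : ℕ) < k).card = k := by
  have h : ∀ m ∈ Finset.range k, m < n := fun m hm =>
    lt_of_lt_of_le (Finset.mem_range.mp hm) hk
  have : ((Finset.univ : Finset (Fin n)).filter fun i : Fin n => (i : ℕ) < k)
      = (Finset.range k).attachFin h := by
    ext i
    simp [Finset.mem_attachFin]
  rw [this, Finset.card_attachFin, Finset.card_range]

lemma aux_num (ε L M : ℝ) (hε : 0 < ε) (hε1 : ε ≤ 1) (hL3 : 3 ≤ L) (hM : 0 < M)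
    (hML : M ≤ L) : 20 * (ε / L) ^ (4:ℕ) * (M / ε ^ 2) ≤ 1 := by
  have hLpos : (0:ℝ) < L := by linarith
  have h27 : (27:ℝ) ≤ L ^ 3 := by
    nlinarith [mul_nonneg (mul_nonneg (sub_nonneg.2 hL3) (sub_nonneg.2 hL3)) (sub_nonneg.2 hL3),
      mul_nonneg (sub_nonneg.2 hL3) hLpos.le]
  have hL27 : 27 * L ≤ L ^ 4 := by
    nlinarith [mul_nonneg (sub_nonneg.2 h27) hLpos.le]
  have hε21 : ε ^ 2 ≤ 1 := by nlinarith
  have hε42 : ε ^ 4 ≤ ε ^ 2 := by nlinarith [mul_le_mul_of_nonneg_left hε21 (sq_nonneg ε)]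
  have t1 : ε ^ 4 * M ≤ ε ^ 2 * M := mul_le_mul_of_nonneg_right hε42 hM.le
  have t3 : ε ^ 2 * M ≤ ε ^ 2 * L := mul_le_mul_of_nonneg_left hML (sq_nonneg ε)
  have t5 : ε ^ 2 * (27 * L) ≤ ε ^ 2 * L ^ 4 := mul_le_mul_of_nonneg_left hL27 (sq_nonneg ε)
  have t6 : (0:ℝ) ≤ ε ^ 2 * L := by positivity
  have h20 : 20 * ε ^ 4 * M ≤ L ^ 4 * ε ^ 2 := by linarith
  have hrw : 20 * (ε / L) ^ (4:ℕ) * (M / ε ^ 2) = (20 * ε ^ 4 * M) / (L ^ 4 * ε ^ 2) := by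
    field_simp
  rw [hrw, div_le_one (by positivity)]
  exact h20

set_option maxHeartbeats 1000000 in
theorem stmt_0 : ∃ n₀ : ℕ, ∀ n : ℕ, n₀ ≤ n →
    ∀ (x a : Fin n → ℤ) (p ε c m ζ : ℝ) (k j : ℕ),
    2 ≤ n → 0 < p → p ≤ 2 → 0 < ε → ε ≤ 1 → 0 ≤ c →
    1 ≤ k → k ≤ n →
    IsRearrangement x a →
    (∀ i, |(x i : ℝ)| ≤ m) → 2 ≤ m → m ≤ (n : ℝ) →
    1 / 2 ≤ ζ → ζ ≤ 1 →
    (ε / Real.log n) ^ c * (tailSum a 2 k / k) ≤ aAbs a k ^ 2 →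
    aAbs a k ≤ ζ * (1 + ε) ^ (tExp ε m - (j : ℝ)) →
    ContributesTop x a p ε m ζ j k →
    ∀ v : ℝ, v = ζ * (1 + ε) ^ (tExp ε m - (j : ℝ) - 1) →
    (ε / Real.log n) ^ (c + 4) * tailSum a 2 (rankOf x v) ≤
      v ^ 2 * ((levelSet x ε m ζ j).card : ℝ) := by
  refine ⟨1000, ?_⟩
  intro n hn x a p ε c m ζ k j hn2 hp hp2 hε hε1 hc hk1 hkn hre hxm hm2 hmn hζ hζ1
    hak2 hakle hcontrib v hveq
  obtain ⟨⟨σ, hσ⟩, hsort⟩ := hre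
  -- basic log facts
  have hL3 : (3:ℝ) ≤ Real.log n := by
    have hexp : Real.exp 3 ≤ 1000 := by
      rw [show (3:ℝ) = 1 + 1 + 1 by norm_num, Real.exp_add, Real.exp_add]
      have he3 : Real.exp 1 < 3 := by
        have := Real.exp_one_lt_d9
        linarith
      nlinarith [Real.exp_pos 1, he3]
    have h1000 : (1000:ℝ) ≤ (n:ℝ) := by exact_mod_cast hn
    calc (3:ℝ) = Real.log (Real.exp 3) := (Real.log_exp 3).symm
      _ ≤ Real.log n := Real.log_le_log (Real.exp_pos 3) (hexp.trans h1000)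
  have hLpos : (0:ℝ) < Real.log n := by linarith
  have hM : (0:ℝ) < Real.log m := Real.log_pos (by linarith)
  have hML : Real.log m ≤ Real.log n := Real.log_le_log (by linarith) hmn
  have hεL_pos : (0:ℝ) < ε / Real.log n := div_pos hε hLpos
  have h1ε : (1:ℝ) ≤ 1 + ε := by linarith
  have hv0 : (0:ℝ) < v := by
    rw [hveq]
    exact mul_pos (by linarith) (Real.rpow_pos_of_pos (by linarith) _)
  have hvtop : ζ * (1 + ε) ^ (tExp ε m - (j : ℝ)) = (1 + ε) * v := by
    rw [hveq, show tExp ε m - (j:ℝ) = (tExp ε m - (j:ℝ) - 1) + 1 by ring,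
      Real.rpow_add (by linarith : (0:ℝ) < 1 + ε), Real.rpow_one]
    ring
  -- abbreviations
  set L := Real.log n with hLdef
  set T := topSum a p k with hTdef
  set S := levelSet x ε m ζ j with hSdef
  set r := rankOf x v with hrdef
  set E := (ε / L) ^ c with hEdef
  set D := (L / ε) ^ c with hDdef
  have hEpos : (0:ℝ) < E := Real.rpow_pos_of_pos hεL_pos c
  have hDpos : (0:ℝ) < D := Real.rpow_pos_of_pos (div_pos hLpos hε) c
  have hED : E * D = 1 := by
    rw [hEdef, hDdef, ← Real.mul_rpow hεL_pos.le (div_pos hLpos hε).le,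
      show ε / L * (L / ε) = 1 by field_simp, Real.one_rpow]
  have hD1 : (1:ℝ) ≤ D := by
    apply Real.one_le_rpow _ hc
    rw [le_div_iff₀ hε]
    linarith
  -- aAbs facts
  have hk1n : k - 1 < n := by omega
  set A := aAbs a k with hAdef
  have hAval : A = |(a ⟨k - 1, hk1n⟩ : ℝ)| := by rw [hAdef, aAbs, dif_pos hk1n]
  have hA0 : (0:ℝ) ≤ A := by rw [hAval]; exact abs_nonneg _
  have hA2v : A ≤ 2 * v := by
    rw [hvtop] at hakle
    nlinarith
  -- rank facts
  have hrcard : r = ((Finset.univ : Finset (Fin n)).filter fun i => v < |(a i : ℝ)|).card := by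
    rw [hrdef, rankOf]
    refine (Finset.card_nbij' (fun i => σ i) (fun i => σ.symm i) ?_ ?_ ?_ ?_).symm
    · intro i hi
      simp only [Finset.mem_coe, Finset.mem_filter, Finset.mem_univ, true_and] at hi ⊢
      rwa [show |((x (σ i)) : ℝ)| = |(a i : ℝ)| by rw [hσ i]]
    · intro i hi
      simp only [Finset.mem_coe, Finset.mem_filter, Finset.mem_univ, true_and] at hi ⊢
      rwa [show |(a (σ.symm i) : ℝ)| = |((x i) : ℝ)| by rw [hσ (σ.symm i), Equiv.apply_symm_apply]]
    · intro i _; simp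
    · intro i _; simp
  have htail_bd : ∀ i : Fin n, r ≤ (i : ℕ) → |(a i : ℝ)| ≤ v := by
    intro i hi
    by_contra hcon
    push_neg at hcon
    have hsub : ((Finset.univ : Finset (Fin n)).filter fun i' : Fin n => (i' : ℕ) < (i : ℕ) + 1) ⊆
        ((Finset.univ : Finset (Fin n)).filter fun i' => v < |(a i' : ℝ)|) := by
      intro i' hi'
      simp only [Finset.mem_filter, Finset.mem_univ, true_and] at hi' ⊢
      have hle : i' ≤ i := Fin.le_def.mpr (by omega)
      have := hsort i' i hle
      have hcast : |(a i : ℝ)| ≤ |(a i' : ℝ)| := by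
        rw [← Int.cast_abs, ← Int.cast_abs]
        exact_mod_cast this
      linarith
    have hcards := Finset.card_le_card hsub
    rw [card_filter_fin_lt n ((i : ℕ) + 1) (by omega), ← hrcard] at hcards
    omega
  -- level set facts
  have hSsum : ∑ i ∈ S, |(x i : ℝ)| ^ p ≤ (S.card : ℝ) * ((1 + ε) * v) ^ p := by
    have hmem : ∀ i ∈ S, |(x i : ℝ)| ^ p ≤ ((1 + ε) * v) ^ p := by
      intro i hi
      rw [hSdef] at hi; simp only [levelSet, Finset.mem_filter] at hi
      obtain ⟨-, -, h2⟩ := hi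
      rw [hvtop] at h2
      exact Real.rpow_le_rpow (abs_nonneg _) h2.le hp.le
    have := Finset.sum_le_card_nsmul S _ _ hmem
    simpa [nsmul_eq_mul] using this
  have h4vp : ((1 + ε) * v) ^ p ≤ 4 * v ^ p := by
    rw [Real.mul_rpow (by linarith) hv0.le]
    have h1 : (1 + ε) ^ p ≤ (1 + ε) ^ (2:ℝ) := Real.rpow_le_rpow_of_exponent_le h1ε hp2
    have h2 : (1 + ε) ^ (2:ℝ) = (1 + ε) ^ (2:ℕ) := by
      rw [show (2:ℝ) = ((2:ℕ):ℝ) by norm_num, Real.rpow_natCast]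
    have h3 : (1 + ε) ^ (2:ℕ) ≤ 4 := by nlinarith
    have hvp : (0:ℝ) ≤ v ^ p := (Real.rpow_pos_of_pos hv0 p).le
    exact mul_le_mul_of_nonneg_right (h1.trans (h2.le.trans h3)) hvp
  have hT0 : (0:ℝ) ≤ T := by
    rw [hTdef]; simp only [topSum]
    exact Finset.sum_nonneg fun i _ => Real.rpow_nonneg (abs_nonneg _) p
  have hTle : T ≤ Real.log m / ε ^ 2 * ((S.card : ℝ) * (4 * v ^ p)) := by
    have hstep : ε ^ 2 / Real.log m * T ≤ (S.card : ℝ) * (4 * v ^ p) := by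
      refine le_trans hcontrib (le_trans hSsum ?_)
      exact mul_le_mul_of_nonneg_left h4vp (Nat.cast_nonneg _)
    calc T = Real.log m / ε ^ 2 * (ε ^ 2 / Real.log m * T) := by
          field_simp
      _ ≤ Real.log m / ε ^ 2 * ((S.card : ℝ) * (4 * v ^ p)) :=
          mul_le_mul_of_nonneg_left hstep (by positivity)
  -- topSum lower bound
  have hkT : (k : ℝ) * A ^ p ≤ T := by
    have hmem : ∀ i ∈ (Finset.univ : Finset (Fin n)).filter (fun i : Fin n => (i : ℕ) < k),
        A ^ p ≤ |(a i : ℝ)| ^ p := by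
      intro i hi
      simp only [Finset.mem_filter, Finset.mem_univ, true_and] at hi
      have hle : i ≤ (⟨k - 1, hk1n⟩ : Fin n) :=
        Fin.le_def.mpr (by show (i : ℕ) ≤ k - 1; omega)
      have := hsort i ⟨k - 1, hk1n⟩ hle
      have hcast : A ≤ |(a i : ℝ)| := by
        rw [hAval, ← Int.cast_abs, ← Int.cast_abs]
        exact_mod_cast this
      exact Real.rpow_le_rpow hA0 hcast hp.le
    have h := Finset.card_nsmul_le_sum _ _ _ hmem
    rw [card_filter_fin_lt n k hkn] at h
    rw [hTdef]; simp only [topSum]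
    simpa [nsmul_eq_mul] using h
  -- tail split
  have hrpow_nonneg : ∀ i : Fin n, (0:ℝ) ≤ |(a i : ℝ)| ^ (2:ℝ) :=
    fun i => Real.rpow_nonneg (abs_nonneg _) _
  have hsplit : tailSum a 2 r ≤
      (∑ i ∈ (Finset.univ : Finset (Fin n)).filter
        (fun i : Fin n => r ≤ (i : ℕ) ∧ (i : ℕ) < k), |(a i : ℝ)| ^ (2:ℝ))
      + tailSum a 2 k := by
    simp only [tailSum]
    rw [← Finset.sum_filter_add_sum_filter_not
      ((Finset.univ : Finset (Fin n)).filter (fun i : Fin n => r ≤ (i : ℕ)))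
      (fun i : Fin n => (i : ℕ) < k)]
    refine add_le_add (le_of_eq ?_) ?_
    · rw [Finset.filter_filter]
    · refine Finset.sum_le_sum_of_subset_of_nonneg ?_ (fun i _ _ => hrpow_nonneg i)
      intro i hi
      simp only [Finset.filter_filter, Finset.mem_filter, Finset.mem_univ, true_and] at hi ⊢
      omega
  -- middle part bound
  have hvq0 : (0:ℝ) ≤ v ^ (2 - p) := (Real.rpow_pos_of_pos hv0 _).le
  have hmid : (∑ i ∈ (Finset.univ : Finset (Fin n)).filter
      (fun i : Fin n => r ≤ (i : ℕ) ∧ (i : ℕ) < k), |(a i : ℝ)| ^ (2:ℝ))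
      ≤ v ^ (2 - p) * T := by
    have hterm : ∀ i ∈ (Finset.univ : Finset (Fin n)).filter
        (fun i : Fin n => r ≤ (i : ℕ) ∧ (i : ℕ) < k),
        |(a i : ℝ)| ^ (2:ℝ) ≤ v ^ (2 - p) * |(a i : ℝ)| ^ p := by
      intro i hi
      simp only [Finset.mem_filter, Finset.mem_univ, true_and] at hi
      have hub := htail_bd i hi.1
      have h0 : (0:ℝ) ≤ |(a i : ℝ)| := abs_nonneg _
      calc |(a i : ℝ)| ^ (2:ℝ) = |(a i : ℝ)| ^ (2 - p) * |(a i : ℝ)| ^ p := by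
            rw [← Real.rpow_add_of_nonneg h0 (by linarith) hp.le]; norm_num
        _ ≤ v ^ (2 - p) * |(a i : ℝ)| ^ p :=
            mul_le_mul_of_nonneg_right (Real.rpow_le_rpow h0 hub (by linarith))
              (Real.rpow_nonneg h0 p)
    calc (∑ i ∈ (Finset.univ : Finset (Fin n)).filter
          (fun i : Fin n => r ≤ (i : ℕ) ∧ (i : ℕ) < k), |(a i : ℝ)| ^ (2:ℝ))
        ≤ ∑ i ∈ (Finset.univ : Finset (Fin n)).filter
          (fun i : Fin n => r ≤ (i : ℕ) ∧ (i : ℕ) < k), v ^ (2 - p) * |(a i : ℝ)| ^ p :=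
          Finset.sum_le_sum hterm
      _ = v ^ (2 - p) * ∑ i ∈ (Finset.univ : Finset (Fin n)).filter
          (fun i : Fin n => r ≤ (i : ℕ) ∧ (i : ℕ) < k), |(a i : ℝ)| ^ p := by
          rw [Finset.mul_sum]
      _ ≤ v ^ (2 - p) * T := by
          refine mul_le_mul_of_nonneg_left ?_ hvq0
          rw [hTdef]; simp only [topSum]
          refine Finset.sum_le_sum_of_subset_of_nonneg ?_
            (fun i _ _ => Real.rpow_nonneg (abs_nonneg _) p)
          intro i hi
          simp only [Finset.mem_filter, Finset.mem_univ, true_and] at hi ⊢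
          exact hi.2
  -- tail(k) bound
  have hkpos : (0:ℝ) < (k : ℝ) := by exact_mod_cast hk1
  have htailk : tailSum a 2 k ≤ D * ((k : ℝ) * A ^ 2) := by
    have heq : (E * (tailSum a 2 k / (k:ℝ))) * (D * (k:ℝ)) = (E * D) * tailSum a 2 k := by
      field_simp
    calc tailSum a 2 k = (E * (tailSum a 2 k / (k:ℝ))) * (D * (k:ℝ)) := by
          rw [heq, hED, one_mul]
      _ ≤ A ^ 2 * (D * (k:ℝ)) :=
          mul_le_mul_of_nonneg_right hak2 (by positivity)
      _ = D * ((k : ℝ) * A ^ 2) := by ring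
  have hA2 : A ^ 2 ≤ 4 * v ^ (2 - p) * A ^ p := by
    have e1 : A ^ (2 - p) * A ^ p = A ^ (2:ℝ) := by
      rw [← Real.rpow_add_of_nonneg hA0 (by linarith) hp.le]; norm_num
    have e2 : A ^ (2:ℝ) = A ^ (2:ℕ) := by
      rw [show (2:ℝ) = ((2:ℕ):ℝ) by norm_num, Real.rpow_natCast]
    have h1 : A ^ (2 - p) ≤ (2 * v) ^ (2 - p) := Real.rpow_le_rpow hA0 hA2v (by linarith)
    have h2 : (2 * v) ^ (2 - p) = (2:ℝ) ^ (2 - p) * v ^ (2 - p) :=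
      Real.mul_rpow (by norm_num) hv0.le
    have h3 : (2:ℝ) ^ (2 - p) ≤ (2:ℝ) ^ (2:ℝ) :=
      Real.rpow_le_rpow_of_exponent_le one_le_two (by linarith)
    have h4 : (2:ℝ) ^ (2:ℝ) = 4 := by
      rw [show (2:ℝ) = ((2:ℕ):ℝ) by norm_num, Real.rpow_natCast]; norm_num
    have hAp0 : (0:ℝ) ≤ A ^ p := Real.rpow_nonneg hA0 p
    calc A ^ 2 = A ^ (2 - p) * A ^ p := by rw [e1, e2]
      _ ≤ (4 * v ^ (2 - p)) * A ^ p := by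
          refine mul_le_mul_of_nonneg_right ?_ hAp0
          calc A ^ (2 - p) ≤ (2:ℝ) ^ (2 - p) * v ^ (2 - p) := by rw [← h2]; exact h1
            _ ≤ 4 * v ^ (2 - p) := mul_le_mul_of_nonneg_right (by rw [← h4]; exact h3) hvq0
      _ = 4 * v ^ (2 - p) * A ^ p := by ring
  -- combine tail bound
  have hchain : tailSum a 2 r ≤ 5 * D * (v ^ (2 - p) * T) := by
    have s1 : D * ((k : ℝ) * A ^ 2) ≤ D * (4 * v ^ (2 - p) * T) := by
      refine mul_le_mul_of_nonneg_left ?_ hDpos.le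
      calc (k : ℝ) * A ^ 2 ≤ (k : ℝ) * (4 * v ^ (2 - p) * A ^ p) :=
            mul_le_mul_of_nonneg_left hA2 hkpos.le
        _ = 4 * v ^ (2 - p) * ((k : ℝ) * A ^ p) := by ring
        _ ≤ 4 * v ^ (2 - p) * T := mul_le_mul_of_nonneg_left hkT (by positivity)
    have s2 : v ^ (2 - p) * T ≤ D * (v ^ (2 - p) * T) := by
      nlinarith [mul_nonneg hvq0 hT0]
    calc tailSum a 2 r ≤ (∑ i ∈ (Finset.univ : Finset (Fin n)).filter
          (fun i : Fin n => r ≤ (i : ℕ) ∧ (i : ℕ) < k), |(a i : ℝ)| ^ (2:ℝ))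
          + tailSum a 2 k := hsplit
      _ ≤ v ^ (2 - p) * T + D * ((k : ℝ) * A ^ 2) := add_le_add hmid htailk
      _ ≤ v ^ (2 - p) * T + D * (4 * v ^ (2 - p) * T) := by linarith
      _ ≤ 5 * D * (v ^ (2 - p) * T) := by nlinarith [mul_nonneg hvq0 hT0]
  have hv2 : v ^ (2 - p) * v ^ p = v ^ 2 := by
    rw [← Real.rpow_add hv0, show 2 - p + p = ((2:ℕ):ℝ) by push_cast; ring,
      Real.rpow_natCast]
  have hBIG : tailSum a 2 r ≤ 20 * D * (Real.log m / ε ^ 2) * ((S.card : ℝ) * v ^ 2) := by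
    calc tailSum a 2 r ≤ 5 * D * (v ^ (2 - p) * T) := hchain
      _ ≤ 5 * D * (v ^ (2 - p) * (Real.log m / ε ^ 2 * ((S.card : ℝ) * (4 * v ^ p)))) := by
          refine mul_le_mul_of_nonneg_left ?_ (by positivity)
          exact mul_le_mul_of_nonneg_left hTle hvq0
      _ = 20 * D * (Real.log m / ε ^ 2) * ((S.card : ℝ) * (v ^ (2 - p) * v ^ p)) := by ring
      _ = 20 * D * (Real.log m / ε ^ 2) * ((S.card : ℝ) * v ^ 2) := by rw [hv2]
  -- final numeric step
  have hsplit4 : (ε / L) ^ (c + 4) = E * (ε / L) ^ (4:ℕ) := by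
    rw [hEdef, ← Real.rpow_natCast (ε / L) 4, ← Real.rpow_add hεL_pos]
    norm_num
  have hnum : 20 * (ε / L) ^ (4:ℕ) * (Real.log m / ε ^ 2) ≤ 1 :=
    aux_num ε L (Real.log m) hε hε1 hL3 hM hML
  have hcard0 : (0:ℝ) ≤ (S.card : ℝ) * v ^ 2 := by positivity
  rw [hsplit4]
  calc E * (ε / L) ^ (4:ℕ) * tailSum a 2 r
      ≤ E * (ε / L) ^ (4:ℕ) * (20 * D * (Real.log m / ε ^ 2) * ((S.card : ℝ) * v ^ 2)) := by
        refine mul_le_mul_of_nonneg_left hBIG ?_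
        positivity
    _ = (E * D) * ((20 * (ε / L) ^ (4:ℕ) * (Real.log m / ε ^ 2)) * ((S.card : ℝ) * v ^ 2)) := by
        ring
    _ = (20 * (ε / L) ^ (4:ℕ) * (Real.log m / ε ^ 2)) * ((S.card : ℝ) * v ^ 2) := by
        rw [hED, one_mul]
    _ ≤ 1 * ((S.card : ℝ) * v ^ 2) := mul_le_mul_of_nonneg_right hnum hcard0
    _ = v ^ 2 * (S.card : ℝ) := by ring
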